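/- For any 0 < t_0 < t_1 < ⋯ < t_{n-1}, the reverse Bessel collocation matrix M_r = (B^r_{j-1}(t_{i-1}))_{1≤i,j≤n} is strictly totally positive. -/

import Mathlib

/-- The reverse Bessel polynomial `B^r_m` evaluated at `x`. -/
noncomputable def revBesselPoly (m : ℕ) (x : ℝ) : ℝ :=
  ∑ k ∈ Finset.range (m + 1),
    ((m + k).factorial : ℝ) / (2 ^ k * (m - k).factorial * k.factorial) * x ^ (m - k)

lemma revBesselPoly_zero (x : ℝ) : revBesselPoly 0 x = 1 := by
  simp [revBesselPoly]

lemma revBesselPoly_one (x : ℝ) : revBesselPoly 1 x = x + 1 := by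
  simp [revBesselPoly, Finset.sum_range_succ, Nat.factorial]

private lemma fact2 (n : ℕ) : ((n+2).factorial : ℝ) = (n+2)*((n+1)*n.factorial) := by
  rw [Nat.factorial_succ, Nat.factorial_succ]; push_cast; ring

lemma revBesselPoly_rec (m : ℕ) (x : ℝ) :
    revBesselPoly (m + 2) x
      = (2 * (m : ℝ) + 3) * revBesselPoly (m + 1) x + x ^ 2 * revBesselPoly m x := by
  unfold revBesselPoly
  rw [Finset.mul_sum, Finset.mul_sum]
  have hr : m + 1 + 1 = m + 2 := rfl
  conv_lhs => rw [Finset.sum_range_succ']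
  rw [Finset.sum_range_succ'
    (fun k => x ^ 2 * (((m + k).factorial : ℝ) /
      (2 ^ k * (m - k).factorial * k.factorial) * x ^ (m - k))) m]
  have h0 : ((m + 2 + 0).factorial : ℝ) / (2 ^ 0 * (m + 2 - 0).factorial * Nat.factorial 0)
        * x ^ (m + 2 - 0)
      = x ^ 2 * (((m + 0).factorial : ℝ) / (2 ^ 0 * (m - 0).factorial * Nat.factorial 0)
        * x ^ (m - 0)) := by
    simp only [Nat.add_zero, Nat.sub_zero, pow_zero, Nat.factorial_zero, Nat.cast_one,
      one_mul, mul_one]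
    have h1 : ((m+2).factorial : ℝ) ≠ 0 := by exact_mod_cast (Nat.factorial_pos (m+2)).ne'
    have h2 : ((m).factorial : ℝ) ≠ 0 := by exact_mod_cast (Nat.factorial_pos m).ne'
    field_simp
    ring
  rw [h0]
  have hpad : ∑ k ∈ Finset.range (m + 2),
        (if k < m then
          x ^ 2 * (((m + (k+1)).factorial : ℝ) /
            (2 ^ (k+1) * (m - (k+1)).factorial * (k+1).factorial) * x ^ (m - (k+1)))
         else 0)
      = ∑ k ∈ Finset.range m,
          x ^ 2 * (((m + (k+1)).factorial : ℝ) /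
            (2 ^ (k+1) * (m - (k+1)).factorial * (k+1).factorial) * x ^ (m - (k+1))) := by
    rw [← Finset.sum_subset (Finset.range_subset_range.2 (show m ≤ m + 2 by omega))]
    · exact Finset.sum_congr rfl fun k hk => if_pos (Finset.mem_range.mp hk)
    · intro k _ hk
      exact if_neg (fun h => hk (Finset.mem_range.mpr h))
  rw [← hpad, hr, ← add_assoc, ← Finset.sum_add_distrib]
  refine congrArg₂ (· + ·) ?_ rfl
  refine Finset.sum_congr rfl fun k hk => ?_
  rw [Finset.mem_range] at hk
  rcases (by omega : k < m ∨ k = m ∨ k = m + 1) with hkm | hkm | hkm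
  · obtain ⟨p, rfl⟩ : ∃ p, m = k + 1 + p := ⟨m - k - 1, by omega⟩
    rw [if_pos hkm]
    have e1 : k + 1 + p + 2 + (k + 1) = (2*k + p + 2) + 2 := by ring
    have e2 : k + 1 + p + 2 - (k + 1) = p + 2 := by omega
    have e3 : k + 1 + p + 1 + k = (2*k + p) + 2 := by omega
    have e4 : k + 1 + p + 1 - k = p + 2 := by omega
    have e5 : k + 1 + p + (k + 1) = (2*k + p) + 2 := by omega
    have e6 : k + 1 + p - (k + 1) = p := by omega
    rw [e1, e2, e3, e4, e5, e6]
    simp only [fact2 (2*k+p+2), fact2 p, fact2 (2*k+p), Nat.factorial_succ k]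
    have hppos : (0:ℝ) < p.factorial := by exact_mod_cast Nat.factorial_pos p
    have hkpos : (0:ℝ) < k.factorial := by exact_mod_cast Nat.factorial_pos k
    have hqpos : (0:ℝ) < (2*k+p).factorial := by exact_mod_cast Nat.factorial_pos _
    have h2 : (0:ℝ) < 2 ^ k := by positivity
    have hx2 : x ^ (p + 2) = x ^ 2 * x ^ p := by ring
    push_cast
    rw [hx2]
    field_simp
    ring
  · subst hkm
    rw [if_neg (lt_irrefl k)]
    have e1 : k + 2 + (k + 1) = (2*k+1) + 2 := by ring
    have e2 : k + 2 - (k + 1) = 1 := by omega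
    have e3 : k + 1 + k = (2*k) + 1 := by omega
    have e4 : k + 1 - k = 1 := by omega
    rw [e1, e2, e3, e4]
    simp only [fact2 (2*k+1), Nat.factorial_succ (2*k), Nat.factorial_succ k,
      Nat.factorial_one]
    have hkpos : (0:ℝ) < k.factorial := by exact_mod_cast Nat.factorial_pos k
    have hqpos : (0:ℝ) < (2*k).factorial := by exact_mod_cast Nat.factorial_pos _
    have h2 : (0:ℝ) < 2 ^ k := by positivity
    push_cast
    field_simp
    ring
  · subst hkm
    rw [if_neg (by omega : ¬ (m + 1 < m))]
    have e1 : m + 2 + (m + 1 + 1) = (2*m+2) + 2 := by ring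
    have e2 : m + 2 - (m + 1 + 1) = 0 := by omega
    have e3 : m + 1 + (m + 1) = (2*m) + 2 := by omega
    have e4 : m + 1 - (m + 1) = 0 := by omega
    have e5 : m + 1 + 1 = m + 2 := rfl
    rw [e1, e2, e3, e4, e5]
    simp only [fact2 (2*m+2), fact2 (2*m), fact2 m, Nat.factorial_succ m, Nat.factorial_zero]
    have hmpos : (0:ℝ) < m.factorial := by exact_mod_cast Nat.factorial_pos m
    have hqpos : (0:ℝ) < (2*m).factorial := by exact_mod_cast Nat.factorial_pos _
    have h2 : (0:ℝ) < 2 ^ m := by positivity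
    push_cast
    field_simp
    ring

/-- A nonzero combination of `s` distinct monomials cannot vanish at `s`
distinct positive points. -/
lemma no_s_roots : ∀ (s : ℕ) (e : Fin s → ℕ), StrictMono e → ∀ c : Fin s → ℝ,
    (∃ j, c j ≠ 0) → ∀ y : Fin s → ℝ, (∀ i, 0 < y i) → StrictMono y →
    ¬ (∀ i, ∑ j, c j * y i ^ e j = 0) := by
  intro s
  induction s with
  | zero => rintro e he c ⟨j, hj⟩; exact absurd j.2 (by omega)
  | succ s IH =>
    intro e he c hc y hy hym hroot
    by_cases hc0 : ∀ j, j ≠ 0 → c j = 0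
    · have h0 : c 0 ≠ 0 := by
        obtain ⟨j, hj⟩ := hc
        by_cases hj0 : j = 0
        · exact hj0 ▸ hj
        · exact absurd (hc0 j hj0) hj
      have := hroot 0
      rw [Finset.sum_eq_single 0 (fun j _ hj => by rw [hc0 j hj, zero_mul])
        (fun h => absurd (Finset.mem_univ _) h)] at this
      exact absurd this (mul_ne_zero h0 (pow_ne_zero _ (hy 0).ne'))
    · push_neg at hc0
      obtain ⟨j₁, hj₁ne, hj₁⟩ := hc0
      -- the function h and its derivative h'
      set h : ℝ → ℝ := fun t => ∑ j, c j * t ^ (e j - e 0) with hh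
      set h' : ℝ → ℝ := fun t => ∑ j, c j * (((e j - e 0 : ℕ)) : ℝ) * t ^ (e j - e 0 - 1)
        with hh'
      have hderiv : ∀ t : ℝ, HasDerivAt h (h' t) t := by
        intro t
        apply HasDerivAt.fun_sum
        intro j _
        simpa [mul_assoc] using (hasDerivAt_pow (e j - e 0) t).const_mul (c j)
      have hroot' : ∀ i, h (y i) = 0 := by
        intro i
        have hyne : (y i) ^ (e 0) ≠ 0 := pow_ne_zero _ (hy i).ne'
        have : h (y i) * (y i) ^ (e 0) = 0 := by
          rw [hh]
          simp only [Finset.sum_mul]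
          rw [← hroot i]
          refine Finset.sum_congr rfl fun j _ => ?_
          rw [mul_assoc, ← pow_add, Nat.sub_add_cancel (he.monotone (Fin.zero_le j))]
        exact (mul_eq_zero.mp this).resolve_right hyne
      -- Rolle between consecutive roots
      have hR : ∀ i : Fin s, ∃ z, z ∈ Set.Ioo (y i.castSucc) (y i.succ) ∧ h' z = 0 := by
        intro i
        have hlt : y i.castSucc < y i.succ := hym Fin.castSucc_lt_succ
        obtain ⟨z, hz, hz'⟩ := exists_hasDerivAt_eq_zero hlt
          (fun t _ => (hderiv t).continuousAt.continuousWithinAt)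
          (by rw [hroot', hroot']) (fun t _ => hderiv t)
        exact ⟨z, hz, hz'⟩
      choose z hzmem hz0 using hR
      have hzpos : ∀ i, 0 < z i := fun i => lt_trans (hy _) (hzmem i).1
      have hzmono : StrictMono z := by
        intro i i' hii'
        calc z i < y i.succ := (hzmem i).2
        _ ≤ y i'.castSucc := hym.monotone (by
            rw [Fin.le_def]
            simp only [Fin.val_succ, Fin.coe_castSucc]
            exact hii')
        _ < z i' := (hzmem i').1
      -- new system
      set e' : Fin s → ℕ := fun j => e j.succ - (e 0 + 1) with he'def
      have he' : StrictMono e' := by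
        intro i i' hii'
        show e i.succ - (e 0 + 1) < e i'.succ - (e 0 + 1)
        have h1 : e 0 + 1 ≤ e i.succ := he (Fin.succ_pos i)
        have h2 : e i.succ < e i'.succ := he (Fin.succ_lt_succ_iff.mpr hii')
        omega
      set c' : Fin s → ℝ := fun j => c j.succ * ((e j.succ - e 0 : ℕ) : ℝ) with hc'def
      have hc' : ∃ j, c' j ≠ 0 := by
        rcases Fin.eq_zero_or_eq_succ j₁ with rfl | ⟨j', rfl⟩
        · exact absurd rfl hj₁ne
        · refine ⟨j', mul_ne_zero hj₁ ?_⟩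
          have : e 0 < e j'.succ := he (Fin.succ_pos j')
          exact_mod_cast Nat.sub_ne_zero_of_lt this
      refine IH e' he' c' hc' z hzpos hzmono (fun i => ?_)
      have := hz0 i
      simp only [hh'] at this
      rw [Fin.sum_univ_succ] at this
      simp only [Nat.sub_self, Nat.cast_zero, mul_zero, zero_mul, zero_add] at this
      rw [← this]
      refine Finset.sum_congr rfl fun j _ => ?_
      rw [hc'def, he'def]
      simp only [mul_assoc]
      congr 2

lemma det_updateRow_finset_sum {k : ℕ} (A : Matrix (Fin k) (Fin k) ℝ) (r : Fin k)
    {ι : Type} (s : Finset ι) (f : ι → Fin k → ℝ) :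
    (A.updateRow r (fun j => ∑ i ∈ s, f i j)).det = ∑ i ∈ s, (A.updateRow r (f i)).det := by
  classical
  induction s using Finset.induction with
  | empty =>
    simp only [Finset.sum_empty]
    exact Matrix.det_eq_zero_of_row_eq_zero r (by simp)
  | insert _ _ hnot ih =>
    rename_i a s'
    rw [Finset.sum_insert hnot]
    have : (fun j => ∑ i ∈ insert a s', f i j)
        = (f a + fun j => ∑ i ∈ s', f i j) := by
      funext j
      simp [Finset.sum_insert hnot]
    rw [this, Matrix.det_updateRow_add, ih]

/-- Positivity of generalized Vandermonde determinants. -/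
lemma gv_pos : ∀ (k : ℕ) (x : Fin k → ℝ), (∀ i, 0 < x i) → StrictMono x →
    ∀ (e : Fin k → ℕ), StrictMono e →
    0 < (Matrix.of fun i j : Fin k => x i ^ e j).det := by
  intro k
  induction k with
  | zero => intro x hx hxm e he; simp [Matrix.det_isEmpty]
  | succ k IH =>
    intro x hx hxm e he
    set M : Matrix (Fin (k+1)) (Fin (k+1)) ℝ := Matrix.of fun i j => x i ^ e j with hM
    set d : Fin (k+1) → ℝ :=
      fun j => (M.updateRow (Fin.last k) (Pi.single j 1)).det with hd
    set g : ℝ → ℝ := fun z => ∑ j, z ^ e j * d j with hg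
    -- g z is the det of M with last row replaced by powers of z
    have hgdet : ∀ z : ℝ, (M.updateRow (Fin.last k) (fun j => z ^ e j)).det = g z := by
      intro z
      have hrow : (fun j : Fin (k+1) => z ^ e j)
          = fun j' => ∑ j, ((z ^ e j) • (Pi.single j (1:ℝ) : Fin (k+1) → ℝ)) j' := by
        funext j'
        simp [Pi.single_apply]
      rw [hrow, det_updateRow_finset_sum]
      refine Finset.sum_congr rfl fun j _ => ?_
      rw [Matrix.det_updateRow_smul]
  -- d at the last slot is the smaller Vandermonde determinant
    have hdlast : d (Fin.last k)
        = (Matrix.of fun i j : Fin k =>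
            (x (Fin.castSucc i)) ^ (e (Fin.castSucc j))).det := by
      show (M.updateRow (Fin.last k) (Pi.single (Fin.last k) 1)).det = _
      rw [Matrix.det_succ_row _ (Fin.last k)]
      rw [Finset.sum_eq_single (Fin.last k)]
      · simp only [Matrix.updateRow_self, Pi.single_eq_same, mul_one]
        rw [Fin.succAbove_last]
        have : ((-1 : ℝ)) ^ ((Fin.last k : ℕ) + (Fin.last k : ℕ)) = 1 := by
          rw [← two_mul]
          exact Even.neg_one_pow ⟨(Fin.last k : ℕ), by ring⟩
        rw [this, one_mul]
        congr 1
        funext i j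
        simp only [Matrix.submatrix_apply]
        rw [Matrix.updateRow_ne (Fin.castSucc_lt_last i).ne]
        rfl
      · intro j _ hj
        simp only [Matrix.updateRow_self]
        rw [Pi.single_eq_of_ne hj]
        ring
      · intro h
        exact absurd (Finset.mem_univ _) h
    have hdlast_pos : 0 < d (Fin.last k) := by
      rw [hdlast]
      exact IH (fun i => x i.castSucc) (fun i => hx _)
        (fun i i' h => hxm (Fin.castSucc_lt_castSucc_iff.mpr h))
        (fun j => e j.castSucc) (fun j j' h => he (Fin.castSucc_lt_castSucc_iff.mpr h))
    -- large-argument positivity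
    set E := e (Fin.last k) with hE
    set C := ∑ j ∈ Finset.univ.erase (Fin.last k), |d j| with hC
    set Z := max (x (Fin.last k)) (max 1 (C / d (Fin.last k))) + 1 with hZdef
    have hZx : x (Fin.last k) < Z := by
      have := le_max_left (x (Fin.last k)) (max 1 (C / d (Fin.last k)))
      rw [hZdef]; linarith
    have hZ1 : (1:ℝ) ≤ Z := by
      have h1 := le_max_right (x (Fin.last k)) (max 1 (C / d (Fin.last k)))
      have h2 := le_max_left (1:ℝ) (C / d (Fin.last k))
      rw [hZdef]; linarith
    have hZ0 : (0:ℝ) < Z := lt_of_lt_of_le one_pos hZ1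
    have hZC : C < d (Fin.last k) * Z := by
      have h1 := le_max_right (x (Fin.last k)) (max 1 (C / d (Fin.last k)))
      have h2 := le_max_right (1:ℝ) (C / d (Fin.last k))
      have h3 : C / d (Fin.last k) < Z := by rw [hZdef]; linarith
      calc C = (C / d (Fin.last k)) * d (Fin.last k) := by
            field_simp
        _ < Z * d (Fin.last k) := by
            exact mul_lt_mul_of_pos_right h3 hdlast_pos
        _ = d (Fin.last k) * Z := by ring
    have hgZpos : 0 < g Z := by
      have hsplit : g Z = (∑ j ∈ Finset.univ.erase (Fin.last k), Z ^ e j * d j)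
          + Z ^ E * d (Fin.last k) := by
        rw [hg]
        exact (Finset.sum_erase_add _ _ (Finset.mem_univ (Fin.last k))).symm
      have habs : |∑ j ∈ Finset.univ.erase (Fin.last k), Z ^ e j * d j|
          ≤ C * Z ^ (E - 1) := by
        refine (Finset.abs_sum_le_sum_abs _ _).trans ?_
        rw [hC, Finset.sum_mul]
        refine Finset.sum_le_sum fun j hj => ?_
        have hjne : j ≠ Fin.last k := (Finset.mem_erase.mp hj).1
        have hjlt : j < Fin.last k := lt_of_le_of_ne (Fin.le_last j) hjne
        have hejE : e j ≤ E - 1 := by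
          have := he hjlt
          omega
        rw [abs_mul, abs_of_nonneg (pow_nonneg hZ0.le _), mul_comm]
        exact mul_le_mul_of_nonneg_left (pow_le_pow_right₀ hZ1 hejE) (abs_nonneg _)
      rcases Nat.eq_zero_or_pos k with hk0 | hkpos
      · subst hk0
        have hempty : (Finset.univ : Finset (Fin 1)).erase (Fin.last 0) = ∅ := by decide
        rw [hsplit, hempty, Finset.sum_empty, zero_add]
        exact mul_pos (pow_pos hZ0 _) hdlast_pos
      · have hE1 : 1 ≤ E := by
          have h0lt : (0 : Fin (k+1)) < Fin.last k := by
            rw [Fin.lt_def]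
            simpa using hkpos
          have := he h0lt
          omega
        have hpow : Z ^ E = Z ^ (E - 1) * Z := by
          rw [← pow_succ]
          congr 1
          omega
        have hP : (0:ℝ) < Z ^ (E-1) := pow_pos hZ0 _
        have hlow : -(C * Z ^ (E-1)) ≤ ∑ j ∈ Finset.univ.erase (Fin.last k), Z ^ e j * d j :=
          neg_le_of_abs_le habs
        have hkey : C * Z ^ (E-1) < d (Fin.last k) * Z * Z ^ (E-1) :=
          mul_lt_mul_of_pos_right hZC hP
        rw [hsplit, hpow]
        nlinarith [hlow, hkey]
    -- the roots of g among the x i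
    have hgroots : ∀ i : Fin (k+1), i ≠ Fin.last k → g (x i) = 0 := by
      intro i hi
      rw [← hgdet]
      refine Matrix.det_zero_of_row_eq hi ?_
      funext j
      rw [Matrix.updateRow_ne hi, Matrix.updateRow_self]
      rfl
    have hdetg : (Matrix.of fun i j : Fin (k+1) => x i ^ e j).det = g (x (Fin.last k)) := by
      rw [← hgdet]
      congr 1
      have hrow : (fun j => x (Fin.last k) ^ e j) = M (Fin.last k) := rfl
      rw [hrow, Matrix.updateRow_eq_self]
    rw [hdetg]
    by_contra hng
    push_neg at hng
    have hcont : ContinuousOn g (Set.Icc (x (Fin.last k)) Z) := by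
      have : Continuous g := by
        rw [hg]
        exact continuous_finset_sum _ fun j _ => (continuous_pow _).mul continuous_const
      exact this.continuousOn
    have hmem : (0:ℝ) ∈ Set.Icc (g (x (Fin.last k))) (g Z) := ⟨hng, hgZpos.le⟩
    obtain ⟨z, hzmem, hz0⟩ := intermediate_value_Icc hZx.le hcont hmem
    set y := Function.update x (Fin.last k) z with hydef
    have hylast : y (Fin.last k) = z := Function.update_self _ _ _
    have hyne : ∀ i : Fin (k+1), i ≠ Fin.last k → y i = x i :=
      fun i hi => Function.update_of_ne hi _ _
    have hymono : StrictMono y := by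
      intro i i' hii'
      by_cases hi' : i' = Fin.last k
      · subst hi'
        have hi : i ≠ Fin.last k := hii'.ne
        rw [hylast, hyne i hi]
        exact lt_of_lt_of_le (hxm (lt_of_le_of_ne (Fin.le_last i) hi)) hzmem.1
      · have hi : i ≠ Fin.last k := by
          intro h
          exact hi' (le_antisymm (Fin.le_last i') (h ▸ hii'.le))
        rw [hyne i hi, hyne i' hi']
        exact hxm hii'
    have hypos : ∀ i, 0 < y i := by
      intro i
      by_cases hi : i = Fin.last k
      · subst hi
        rw [hylast]
        exact lt_of_lt_of_le (hx (Fin.last k)) hzmem.1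
      · rw [hyne i hi]; exact hx i
    refine no_s_roots (k+1) e he d ⟨Fin.last k, hdlast_pos.ne'⟩ y hypos hymono (fun i => ?_)
    by_cases hi : i = Fin.last k
    · subst hi
      rw [hylast, ← hz0, hg]
      exact Finset.sum_congr rfl fun j _ => mul_comm _ _
    · rw [hyne i hi, ← hgroots i hi, hg]
      exact Finset.sum_congr rfl fun j _ => mul_comm _ _


lemma gv_nonneg (k : ℕ) (x : Fin k → ℝ) (hx : ∀ i, 0 < x i) (hxm : StrictMono x)
    (e : Fin k → ℕ) (he : Monotone e) :
    0 ≤ (Matrix.of fun i j : Fin k => x i ^ e j).det := by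
  by_cases hinj : Function.Injective e
  · exact (gv_pos k x hx hxm e (he.strictMono_of_injective hinj)).le
  · rw [Function.not_injective_iff] at hinj
    obtain ⟨i, i', heq, hne⟩ := hinj
    rw [Matrix.det_zero_of_column_eq hne (fun r => by simp [heq])]

lemma monotone_update {k : ℕ} {f : Fin k → ℕ} (hf : Monotone f) (j0 : Fin k) (v : ℕ)
    (h1 : ∀ i, i < j0 → f i ≤ v) (h2 : ∀ i, j0 < i → v ≤ f i) :
    Monotone (Function.update f j0 v) := by
  intro i i' hii'
  rw [Function.update_apply, Function.update_apply]
  split_ifs with ha hb hb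
  · exact le_rfl
  · exact h2 i' (lt_of_le_of_ne (ha ▸ hii') (Ne.symm hb))
  · exact h1 i (lt_of_le_of_ne (hb ▸ hii') ha)
  · exact hf hii'

lemma strictMono_update {k : ℕ} {f : Fin k → ℕ} (hf : StrictMono f) (j0 : Fin k) (v : ℕ)
    (h1 : ∀ i, i < j0 → f i < v) (h2 : ∀ i, j0 < i → v < f i) :
    StrictMono (Function.update f j0 v) := by
  intro i i' hii'
  rw [Function.update_apply, Function.update_apply]
  split_ifs with ha hb hb
  · subst ha; subst hb; exact absurd hii' (lt_irrefl _)
  · subst ha; exact h2 i' hii'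
  · subst hb; exact h1 i hii'
  · exact hf hii'

/-- The collocation matrix of the columns `x ^ l j * θ_{m j} (x)`. -/
noncomputable def besMat (k : ℕ) (l m : Fin k → ℕ) (x : Fin k → ℝ) :
    Matrix (Fin k) (Fin k) ℝ :=
  Matrix.of fun i j => x i ^ l j * revBesselPoly (m j) (x i)

lemma besMat_monomial {k : ℕ} (l m : Fin k → ℕ) (x : Fin k → ℝ) (hm : ∀ j, m j = 0) :
    besMat k l m x = Matrix.of fun i j => x i ^ l j := by
  ext i j
  simp [besMat, hm j, revBesselPoly_zero]

lemma besMat_det_split_one {k : ℕ} (l m : Fin k → ℕ) (x : Fin k → ℝ) (j0 : Fin k)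
    (hj0 : m j0 = 1) :
    (besMat k l m x).det
      = (besMat k l (Function.update m j0 0) x).det
        + (besMat k (Function.update l j0 (l j0 + 1)) (Function.update m j0 0) x).det := by
  set u : Fin k → ℝ := fun i => x i ^ (l j0) * revBesselPoly 0 (x i) with hu
  set v : Fin k → ℝ := fun i => x i ^ (l j0 + 1) * revBesselPoly 0 (x i) with hv
  have hcol : (fun i => besMat k l m x i j0) = u + v := by
    funext i
    simp only [besMat, Matrix.of_apply, Pi.add_apply, hu, hv, hj0,
      revBesselPoly_one, revBesselPoly_zero]
    rw [pow_add]
    ring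
  have h0 : besMat k l m x = (besMat k l m x).updateCol j0 (u + v) := by
    rw [← hcol, Matrix.updateCol_eq_self]
  rw [h0, Matrix.det_updateCol_add]
  have hA : (besMat k l m x).updateCol j0 u = besMat k l (Function.update m j0 0) x := by
    ext i j
    rw [Matrix.updateCol_apply]
    by_cases hj : j = j0
    · subst hj
      simp [besMat, hu]
    · simp [besMat, if_neg hj, Function.update_of_ne hj]
  have hB : (besMat k l m x).updateCol j0 v
      = besMat k (Function.update l j0 (l j0 + 1)) (Function.update m j0 0) x := by
    ext i j
    rw [Matrix.updateCol_apply]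
    by_cases hj : j = j0
    · subst hj
      simp [besMat, hv]
    · simp [besMat, if_neg hj, Function.update_of_ne hj]
  rw [hA, hB]

lemma besMat_det_split_two {k : ℕ} (l m : Fin k → ℕ) (x : Fin k → ℝ) (j0 : Fin k)
    (m' : ℕ) (hj0 : m j0 = m' + 2) :
    (besMat k l m x).det
      = (2*(m':ℝ)+3) * (besMat k l (Function.update m j0 (m'+1)) x).det
        + (besMat k (Function.update l j0 (l j0 + 2)) (Function.update m j0 m') x).det := by
  set u : Fin k → ℝ := fun i => x i ^ (l j0) * revBesselPoly (m'+1) (x i) with hu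
  set v : Fin k → ℝ := fun i => x i ^ (l j0 + 2) * revBesselPoly m' (x i) with hv
  have hcol : (fun i => besMat k l m x i j0) = (2*(m':ℝ)+3) • u + v := by
    funext i
    simp only [besMat, Matrix.of_apply, Pi.add_apply, Pi.smul_apply, smul_eq_mul, hu, hv,
      hj0, revBesselPoly_rec]
    rw [pow_add]
    ring
  have h0 : besMat k l m x = (besMat k l m x).updateCol j0 ((2*(m':ℝ)+3) • u + v) := by
    rw [← hcol, Matrix.updateCol_eq_self]
  rw [h0, Matrix.det_updateCol_add, Matrix.det_updateCol_smul]
  have hA : (besMat k l m x).updateCol j0 u = besMat k l (Function.update m j0 (m'+1)) x := by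
    ext i j
    rw [Matrix.updateCol_apply]
    by_cases hj : j = j0
    · subst hj
      simp [besMat, hu]
    · simp [besMat, if_neg hj, Function.update_of_ne hj]
  have hB : (besMat k l m x).updateCol j0 v
      = besMat k (Function.update l j0 (l j0 + 2)) (Function.update m j0 m') x := by
    ext i j
    rw [Matrix.updateCol_apply]
    by_cases hj : j = j0
    · subst hj
      simp [besMat, hv]
    · simp [besMat, if_neg hj, Function.update_of_ne hj]
  rw [hA, hB]

/-- Base case (weak): all `m j ≤ 1`. -/
lemma base_nonneg : ∀ (N k : ℕ) (x : Fin k → ℝ), (∀ i, 0 < x i) → StrictMono x →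
    ∀ l m : Fin k → ℕ, (∀ j, m j ≤ 1) → Monotone l → Monotone (fun j => l j + m j) →
    (∑ j, m j) ≤ N → 0 ≤ (besMat k l m x).det := by
  intro N
  induction N with
  | zero =>
    intro k x hx hxm l m hm1 hl hu hb
    have hm0 : ∀ j, m j = 0 := by
      intro j
      have := Finset.single_le_sum (f := m) (fun i _ => Nat.zero_le _) (Finset.mem_univ j)
      omega
    rw [besMat_monomial l m x hm0]
    exact gv_nonneg k x hx hxm l hl
  | succ N IH =>
    intro k x hx hxm l m hm1 hl hu hb
    by_cases hdist : ∀ i i' : Fin k, l i = l i' → m i = m i' → i = i'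
    · by_cases hall : ∀ j, m j = 0
      · rw [besMat_monomial l m x hall]
        exact gv_nonneg k x hx hxm l hl
      · push_neg at hall
        have hTne : (Finset.univ.filter (fun i => m i ≠ 0)).Nonempty := by
          obtain ⟨j, hj⟩ := hall
          exact ⟨j, by simp [hj]⟩
        set j0 := (Finset.univ.filter (fun i => m i ≠ 0)).min' hTne with hj0def
        have hj0mem : m j0 ≠ 0 := by
          have := Finset.min'_mem _ hTne
          rw [Finset.mem_filter] at this
          exact this.2
        have hj0 : m j0 = 1 := by have := hm1 j0; omega
        have hfirst : ∀ i, i < j0 → m i = 0 := by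
          intro i hi
          by_contra hne
          exact absurd (Finset.min'_le _ i (by simp [hne])) (not_le.mpr hi)
        rw [besMat_det_split_one l m x j0 hj0]
        have hsum1 : ∑ j, Function.update m j0 0 j = (∑ j, m j) - 1 := by
          rw [Finset.sum_update_of_mem (Finset.mem_univ j0)]
          rw [← Finset.add_sum_erase _ m (Finset.mem_univ j0), Finset.sdiff_singleton_eq_erase]
          omega
        have hb' : ∑ j, Function.update m j0 0 j ≤ N := by omega
        have hm1' : ∀ j, Function.update m j0 0 j ≤ 1 := by
          intro j
          rw [Function.update_apply]
          split_ifs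
          · omega
          · exact hm1 j
        -- first summand
        have hA : 0 ≤ (besMat k l (Function.update m j0 0) x).det := by
          refine IH k x hx hxm l _ hm1' hl ?_ hb'
          have : (fun j => l j + Function.update m j0 0 j)
              = Function.update (fun j => l j + m j) j0 (l j0) := by
            funext j
            rw [Function.update_apply, Function.update_apply]
            split_ifs with hj
            · subst hj; omega
            · rfl
          rw [this]
          refine monotone_update hu j0 (l j0) ?_ ?_
          · intro i hi
            show l i + m i ≤ l j0
            have := hfirst i hi
            have := hl hi.le
            omega
          · intro i hi
            show l j0 ≤ l i + m i
            have h5 : l j0 + m j0 ≤ l i + m i := hu hi.le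
            omega
        -- second summand
        have hB : 0 ≤ (besMat k (Function.update l j0 (l j0 + 1))
            (Function.update m j0 0) x).det := by
          have hlmono : Monotone (Function.update l j0 (l j0 + 1)) := by
            refine monotone_update hl j0 (l j0 + 1) ?_ ?_
            · intro i hi
              have := hl hi.le
              omega
            · intro i hi
              -- l j0 + 1 ≤ l i  for i > j0
              by_contra hcon
              have hle : l i ≤ l j0 := by omega
              have hge : l j0 ≤ l i := hl hi.le
              have hleq : l i = l j0 := le_antisymm hle hge
              have hui : l j0 + m j0 ≤ l i + m i := hu hi.le
              have hmi0 : m i = 1 := by have := hm1 i; omega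
              exact absurd (hdist i j0 hleq (by omega)) hi.ne'
          have huB : (fun j => Function.update l j0 (l j0 + 1) j
                + Function.update m j0 0 j) = fun j => l j + m j := by
            funext j
            rw [Function.update_apply, Function.update_apply]
            split_ifs with hj
            · subst hj; omega
            · rfl
          refine IH k x hx hxm _ _ hm1' hlmono ?_ hb'
          rw [huB]
          exact hu
        linarith
    · push_neg at hdist
      obtain ⟨i, i', hli, hmi, hne⟩ := hdist
      rw [Matrix.det_zero_of_column_eq hne (fun r => by simp [besMat, hli, hmi])]

/-- Base case (strict): all `m j ≤ 1`, strictly increasing upper exponents. -/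
lemma base_pos : ∀ (N k : ℕ) (x : Fin k → ℝ), (∀ i, 0 < x i) → StrictMono x →
    ∀ l m : Fin k → ℕ, (∀ j, m j ≤ 1) → Monotone l → StrictMono (fun j => l j + m j) →
    (∑ j, m j) ≤ N → 0 < (besMat k l m x).det := by
  intro N
  induction N with
  | zero =>
    intro k x hx hxm l m hm1 hl hu hb
    have hm0 : ∀ j, m j = 0 := by
      intro j
      have := Finset.single_le_sum (f := m) (fun i _ => Nat.zero_le _) (Finset.mem_univ j)
      omega
    rw [besMat_monomial l m x hm0]
    refine gv_pos k x hx hxm l ?_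
    intro i i' hii'
    have h := hu hii'
    simp only [hm0] at h
    omega
  | succ N IH =>
    intro k x hx hxm l m hm1 hl hu hb
    by_cases hall : ∀ j, m j = 0
    · rw [besMat_monomial l m x hall]
      refine gv_pos k x hx hxm l ?_
      intro i i' hii'
      have h := hu hii'
      simp only [hall] at h
      omega
    · push_neg at hall
      have hTne : (Finset.univ.filter (fun i => m i ≠ 0)).Nonempty := by
        obtain ⟨j, hj⟩ := hall
        exact ⟨j, by simp [hj]⟩
      set j0 := (Finset.univ.filter (fun i => m i ≠ 0)).min' hTne with hj0def
      have hj0mem : m j0 ≠ 0 := by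
        have := Finset.min'_mem _ hTne
        rw [Finset.mem_filter] at this
        exact this.2
      have hj0 : m j0 = 1 := by have := hm1 j0; omega
      have hfirst : ∀ i, i < j0 → m i = 0 := by
        intro i hi
        by_contra hne
        exact absurd (Finset.min'_le _ i (by simp [hne])) (not_le.mpr hi)
      rw [besMat_det_split_one l m x j0 hj0]
      have hsum1 : ∑ j, Function.update m j0 0 j = (∑ j, m j) - 1 := by
        rw [Finset.sum_update_of_mem (Finset.mem_univ j0)]
        rw [← Finset.add_sum_erase _ m (Finset.mem_univ j0), Finset.sdiff_singleton_eq_erase]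
        omega
      have hb' : ∑ j, Function.update m j0 0 j ≤ N := by omega
      have hm1' : ∀ j, Function.update m j0 0 j ≤ 1 := by
        intro j
        rw [Function.update_apply]
        split_ifs
        · omega
        · exact hm1 j
      have hA : 0 ≤ (besMat k l (Function.update m j0 0) x).det := by
        refine base_nonneg N k x hx hxm l _ hm1' hl ?_ hb'
        have heq : (fun j => l j + Function.update m j0 0 j)
            = Function.update (fun j => l j + m j) j0 (l j0) := by
          funext j
          rw [Function.update_apply, Function.update_apply]
          split_ifs with hj
          · subst hj; omega
          · rfl
        rw [heq]
        refine monotone_update hu.monotone j0 (l j0) ?_ ?_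
        · intro i hi
          show l i + m i ≤ l j0
          have h5 : l i + m i < l j0 + m j0 := hu hi
          omega
        · intro i hi
          show l j0 ≤ l i + m i
          have h5 : l j0 + m j0 < l i + m i := hu hi
          omega
      have hB : 0 < (besMat k (Function.update l j0 (l j0 + 1))
          (Function.update m j0 0) x).det := by
        have hlmono : Monotone (Function.update l j0 (l j0 + 1)) := by
          refine monotone_update hl j0 (l j0 + 1) ?_ ?_
          · intro i hi
            have := hl hi.le
            omega
          · intro i hi
            have h5 : l j0 + m j0 < l i + m i := hu hi
            have := hm1 i
            omega
        have huB : (fun j => Function.update l j0 (l j0 + 1) j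
              + Function.update m j0 0 j) = fun j => l j + m j := by
          funext j
          rw [Function.update_apply, Function.update_apply]
          split_ifs with hj
          · subst hj; omega
          · rfl
        refine IH k x hx hxm _ _ hm1' hlmono ?_ hb'
        rw [huB]
        exact hu
      linarith

/-- Main lemma (weak form): nonnegativity of generalized Bessel collocation minors. -/
lemma main_nonneg : ∀ (N k : ℕ) (x : Fin k → ℝ), (∀ i, 0 < x i) → StrictMono x →
    ∀ l m : Fin k → ℕ, (∀ j, Even (l j)) → Monotone l → Monotone (fun j => l j + m j) →
    (∑ j, m j) ≤ N → 0 ≤ (besMat k l m x).det := by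
  intro N
  induction N with
  | zero =>
    intro k x hx hxm l m hev hl hu hb
    have hm1 : ∀ j, m j ≤ 1 := by
      intro j
      have := Finset.single_le_sum (f := m) (fun i _ => Nat.zero_le _) (Finset.mem_univ j)
      omega
    exact base_nonneg 0 k x hx hxm l m hm1 hl hu hb
  | succ N IH =>
    intro k x hx hxm l m hev hl hu hb
    by_cases hsmall : ∀ j, m j ≤ 1
    · exact base_nonneg (N+1) k x hx hxm l m hsmall hl hu hb
    by_cases hdist : ∀ i i' : Fin k, l i = l i' → m i = m i' → i = i'
    swap
    · push_neg at hdist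
      obtain ⟨i, i', hli, hmi, hne⟩ := hdist
      rw [Matrix.det_zero_of_column_eq hne (fun r => by simp [besMat, hli, hmi])]
    push_neg at hsmall
    have hTne : (Finset.univ.filter (fun i => 2 ≤ m i)).Nonempty := by
      obtain ⟨j, hj⟩ := hsmall
      exact ⟨j, by simp; omega⟩
    set jt := (Finset.univ.filter (fun i => 2 ≤ m i)).max' hTne with hjtdef
    have hjtm : 2 ≤ m jt := by
      have := Finset.max'_mem _ hTne
      rw [Finset.mem_filter] at this
      exact this.2
    have hjtmax : ∀ i, 2 ≤ m i → i ≤ jt := fun i hi => Finset.le_max' _ i (by simp [hi])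
    have hBne : (Finset.univ.filter (fun i => l i + m i = l jt + m jt)).Nonempty :=
      ⟨jt, by simp⟩
    set j0 := (Finset.univ.filter (fun i => l i + m i = l jt + m jt)).min' hBne with hj0def
    have hj0u : l j0 + m j0 = l jt + m jt := by
      have := Finset.min'_mem _ hBne
      rw [Finset.mem_filter] at this
      exact this.2
    have hj0min : ∀ i, l i + m i = l jt + m jt → j0 ≤ i := fun i hi =>
      Finset.min'_le _ i (by simp [hi])
    have hj0le : j0 ≤ jt := hj0min jt rfl
    have hl0 : l j0 ≤ l jt := hl hj0le
    have hm0 : 2 ≤ m j0 := by omega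
    obtain ⟨m', hm'⟩ : ∃ m', m j0 = m' + 2 := ⟨m j0 - 2, by omega⟩
    rw [besMat_det_split_two l m x j0 m' hm']
    have hsum0 : ∑ j, m j = m j0 + ∑ j ∈ Finset.univ.erase j0, m j := by
      rw [← Finset.add_sum_erase _ m (Finset.mem_univ j0)]
    -- first child
    have hA : 0 ≤ (besMat k l (Function.update m j0 (m'+1)) x).det := by
      have hsum1 : ∑ j, Function.update m j0 (m'+1) j
          = (m'+1) + ∑ j ∈ Finset.univ.erase j0, m j := by
        rw [Finset.sum_update_of_mem (Finset.mem_univ j0), Finset.sdiff_singleton_eq_erase]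
      refine IH k x hx hxm l _ hev hl ?_ (by omega)
      have heq : (fun j => l j + Function.update m j0 (m'+1) j)
          = Function.update (fun j => l j + m j) j0 (l j0 + (m'+1)) := by
        funext j
        rw [Function.update_apply, Function.update_apply]
        split_ifs with hj
        · subst hj; rfl
        · rfl
      rw [heq]
      refine monotone_update hu j0 (l j0 + (m'+1)) ?_ ?_
      · intro i hi
        show l i + m i ≤ l j0 + (m' + 1)
        have h5 : l i + m i ≤ l j0 + m j0 := hu hi.le
        have h6 : l i + m i ≠ l jt + m jt := by
          intro hcon
          exact absurd (hj0min i hcon) (not_le.mpr hi)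
        omega
      · intro i hi
        show l j0 + (m' + 1) ≤ l i + m i
        have h5 : l j0 + m j0 ≤ l i + m i := hu hi.le
        omega
    -- second child
    have hB : 0 ≤ (besMat k (Function.update l j0 (l j0 + 2))
        (Function.update m j0 m') x).det := by
      have hsum2 : ∑ j, Function.update m j0 m' j
          = m' + ∑ j ∈ Finset.univ.erase j0, m j := by
        rw [Finset.sum_update_of_mem (Finset.mem_univ j0), Finset.sdiff_singleton_eq_erase]
      have hev' : ∀ j, Even (Function.update l j0 (l j0 + 2) j) := by
        intro j
        rw [Function.update_apply]
        split_ifs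
        · obtain ⟨p, hp⟩ := hev j0
          exact ⟨p + 1, by omega⟩
        · exact hev j
      have hlmono : Monotone (Function.update l j0 (l j0 + 2)) := by
        refine monotone_update hl j0 (l j0 + 2) ?_ ?_
        · intro i hi
          have := hl hi.le
          omega
        · intro i hi
          by_cases hiB : l i + m i = l jt + m jt
          · have hlne : l i ≠ l j0 := by
              intro hcon
              have : m i = m j0 := by omega
              exact absurd (hdist i j0 hcon this) hi.ne'
            have hge : l j0 ≤ l i := hl hi.le
            obtain ⟨p, hp⟩ := hev i
            obtain ⟨q, hq⟩ := hev j0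
            omega
          · have h5 : l j0 + m j0 ≤ l i + m i := hu hi.le
            have h6 : jt < i := by
              by_contra hcon
              push_neg at hcon
              have h8 : l i + m i ≤ l jt + m jt := hu hcon
              omega
            have h7 : m i ≤ 1 := by
              by_contra hcon
              push_neg at hcon
              exact absurd (hjtmax i (by omega)) (not_le.mpr h6)
            omega
      have huB : (fun j => Function.update l j0 (l j0 + 2) j
            + Function.update m j0 m' j) = fun j => l j + m j := by
        funext j
        rw [Function.update_apply, Function.update_apply]
        split_ifs with hj
        · subst hj; omega
        · rfl
      refine IH k x hx hxm _ _ hev' hlmono ?_ (by omega)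
      rw [huB]
      exact hu
    have hc : (0:ℝ) ≤ 2*(m':ℝ)+3 := by positivity
    nlinarith

/-- Main lemma (strict form): positivity of generalized Bessel collocation minors. -/
lemma main_pos : ∀ (N k : ℕ) (x : Fin k → ℝ), (∀ i, 0 < x i) → StrictMono x →
    ∀ l m : Fin k → ℕ, (∀ j, Even (l j)) → Monotone l → StrictMono (fun j => l j + m j) →
    (∑ j, m j) ≤ N → 0 < (besMat k l m x).det := by
  intro N
  induction N with
  | zero =>
    intro k x hx hxm l m hev hl hu hb
    have hm1 : ∀ j, m j ≤ 1 := by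
      intro j
      have := Finset.single_le_sum (f := m) (fun i _ => Nat.zero_le _) (Finset.mem_univ j)
      omega
    exact base_pos 0 k x hx hxm l m hm1 hl hu hb
  | succ N IH =>
    intro k x hx hxm l m hev hl hu hb
    by_cases hsmall : ∀ j, m j ≤ 1
    · exact base_pos (N+1) k x hx hxm l m hsmall hl hu hb
    push_neg at hsmall
    have hTne : (Finset.univ.filter (fun i => 2 ≤ m i)).Nonempty := by
      obtain ⟨j, hj⟩ := hsmall
      exact ⟨j, by simp; omega⟩
    set jt := (Finset.univ.filter (fun i => 2 ≤ m i)).max' hTne with hjtdef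
    have hjtm : 2 ≤ m jt := by
      have := Finset.max'_mem _ hTne
      rw [Finset.mem_filter] at this
      exact this.2
    have hjtmax : ∀ i, 2 ≤ m i → i ≤ jt := fun i hi => Finset.le_max' _ i (by simp [hi])
    obtain ⟨m', hm'⟩ : ∃ m', m jt = m' + 2 := ⟨m jt - 2, by omega⟩
    rw [besMat_det_split_two l m x jt m' hm']
    have hsum0 : ∑ j, m j = m jt + ∑ j ∈ Finset.univ.erase jt, m j := by
      rw [← Finset.add_sum_erase _ m (Finset.mem_univ jt)]
    -- first child (weak)
    have hA : 0 ≤ (besMat k l (Function.update m jt (m'+1)) x).det := by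
      have hsum1 : ∑ j, Function.update m jt (m'+1) j
          = (m'+1) + ∑ j ∈ Finset.univ.erase jt, m j := by
        rw [Finset.sum_update_of_mem (Finset.mem_univ jt), Finset.sdiff_singleton_eq_erase]
      refine main_nonneg ((m'+1) + ∑ j ∈ Finset.univ.erase jt, m j) k x hx hxm l _
        hev hl ?_ (by omega)
      have heq : (fun j => l j + Function.update m jt (m'+1) j)
          = Function.update (fun j => l j + m j) jt (l jt + (m'+1)) := by
        funext j
        rw [Function.update_apply, Function.update_apply]
        split_ifs with hj
        · subst hj; rfl
        · rfl
      rw [heq]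
      refine monotone_update hu.monotone jt (l jt + (m'+1)) ?_ ?_
      · intro i hi
        show l i + m i ≤ l jt + (m' + 1)
        have h5 : l i + m i < l jt + m jt := hu hi
        omega
      · intro i hi
        show l jt + (m' + 1) ≤ l i + m i
        have h5 : l jt + m jt < l i + m i := hu hi
        omega
    -- second child (strict)
    have hB : 0 < (besMat k (Function.update l jt (l jt + 2))
        (Function.update m jt m') x).det := by
      have hsum2 : ∑ j, Function.update m jt m' j
          = m' + ∑ j ∈ Finset.univ.erase jt, m j := by
        rw [Finset.sum_update_of_mem (Finset.mem_univ jt), Finset.sdiff_singleton_eq_erase]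
      have hev' : ∀ j, Even (Function.update l jt (l jt + 2) j) := by
        intro j
        rw [Function.update_apply]
        split_ifs
        · obtain ⟨p, hp⟩ := hev jt
          exact ⟨p + 1, by omega⟩
        · exact hev j
      have hlmono : Monotone (Function.update l jt (l jt + 2)) := by
        refine monotone_update hl jt (l jt + 2) ?_ ?_
        · intro i hi
          have := hl hi.le
          omega
        · intro i hi
          have h5 : l jt + m jt < l i + m i := hu hi
          have h7 : m i ≤ 1 := by
            by_contra hcon
            push_neg at hcon
            exact absurd (hjtmax i (by omega)) (not_le.mpr hi)
          omega
      have huB : (fun j => Function.update l jt (l jt + 2) j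
            + Function.update m jt m' j) = fun j => l j + m j := by
        funext j
        rw [Function.update_apply, Function.update_apply]
        split_ifs with hj
        · subst hj; omega
        · rfl
      refine IH k x hx hxm _ _ hev' hlmono ?_ (by omega)
      rw [huB]
      exact hu
    have hc : (0:ℝ) ≤ 2*(m':ℝ)+3 := by positivity
    nlinarith

theorem revBessel_collocation_STP (n : ℕ) (t : Fin n → ℝ)
    (hpos : ∀ i, 0 < t i) (hmono : StrictMono t) :
    let M : Matrix (Fin n) (Fin n) ℝ := fun i j => revBesselPoly j (t i)
    ∀ (k : ℕ) (r c : Fin k → Fin n), StrictMono r → StrictMono c →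
      0 < (M.submatrix r c).det := by
  intro M k r c hr hc
  have hsub : M.submatrix r c
      = besMat k (fun _ => 0) (fun j => (c j : ℕ)) (fun i => t (r i)) := by
    ext i j
    show revBesselPoly (c j) (t (r i)) = _
    simp [besMat]
  rw [hsub]
  refine main_pos (∑ j : Fin k, (c j : ℕ)) k (fun i => t (r i))
    (fun i => hpos (r i)) (hmono.comp hr) (fun _ => 0) (fun j => (c j : ℕ))
    (fun _ => Even.zero) monotone_const ?_ le_rfl
  intro a b hab
  simpa using hc hab
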